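/- Let D=(V_1,V_2;A) be a semicomplete split digraph and let s_1,s_2,t_1,t_2 be distinct vertices of D. Let P_1,P_2,P_3 be three internally disjoint minimal (s_1,t_1)-paths in D−{s_2,t_2} and let Q_1,Q_2,Q_3 be three internally disjoint minimal (s_2,t_2)-paths in D−{s_1,t_1}. Assume the tuple (D,s_1,t_1,s_2,t_2) is not good, and let S=(V(P_1)∪V(P_2)∪V(P_3))∖{s_1,t_1}. For each i∈{1,2,3}, the path Q_i intersects S; let z_i be the first and w_i the last vertex of Q_i lying in S (in the order along Q_i). Assume additionally that for every i∈{1,2,3}, exactly one of z_1,z_2,z_3 lies on P_i and exactly one of w_1,w_2,w_3 lies on P_i. Then for each i∈{1,2,3}, the path P_i has exactly 5 vertices; writing P_i as s_1→a_i→y_i→b_i→t_1, the vertices a_i and b_i belong to V_1 and the vertex y_i belongs to V_2. -/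

import Mathlib

/-- A digraph (given by its arc relation `A`) is loopless. -/
def IsLoopless {V : Type*} (A : V → V → Prop) : Prop :=
  ∀ v, ¬ A v v

/-- `l` is a directed path in the digraph with arc relation `A`, recorded as the
(nonempty, repetition-free) list of its vertices, consecutive ones joined by arcs. -/
def IsDipath {V : Type*} (A : V → V → Prop) (l : List V) : Prop :=
  l ≠ [] ∧ l.Nodup ∧ l.Chain' A

/-- `l` is a directed `(s,t)`-path. -/
def IsDipathFrom {V : Type*} (A : V → V → Prop) (s t : V) (l : List V) : Prop :=
  IsDipath A l ∧ l.head? = some s ∧ l.getLast? = some t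

/-- The digraph `A`, with the vertices of `F` deleted, contains `k` internally
disjoint `(s,t)`-paths. -/
def HasIDPaths {V : Type*} (A : V → V → Prop) (F : Set V) (s t : V) (k : ℕ) : Prop :=
  ∃ P : Fin k → List V,
    (∀ i, IsDipathFrom A s t (P i) ∧ ∀ v ∈ P i, v ∉ F) ∧
    (∀ i j, i ≠ j → ∀ v, v ∈ P i → v ∈ P j → v = s ∨ v = t)

/-- The digraph `A` is `k`-linked. -/
def IsKLinked {V : Type*} (A : V → V → Prop) (k : ℕ) : Prop :=
  ∀ s t : Fin k → V,
    Function.Injective (Sum.elim s t : Fin k ⊕ Fin k → V) →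
    ∃ P : Fin k → List V,
      (∀ i, IsDipathFrom A (s i) (t i) (P i)) ∧
      (∀ i j, i ≠ j → ∀ v, v ∈ P i → v ∉ P j)

/-- The digraph `A` is `k`-strong. -/
def IsKStrong {V : Type*} [Fintype V] (A : V → V → Prop) (k : ℕ) : Prop :=
  k + 1 ≤ Fintype.card V ∧
  ∀ F : Finset V, F.card ≤ k - 1 →
    ∀ x y : V, x ∉ F → y ∉ F → x ≠ y →
      ∃ l : List V, IsDipathFrom A x y l ∧ ∀ v ∈ l, v ∉ F

/-- `(A, V1, V2)` is a split digraph: the vertex set is the disjoint union of the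
nonempty sets `V1` and `V2`, there is no arc between two vertices of `V1`, and the
subdigraph induced by `V2` is semicomplete. -/
def IsSplitDigraph {V : Type*} (A : V → V → Prop) (V1 V2 : Set V) : Prop :=
  V1.Nonempty ∧ V2.Nonempty ∧ Disjoint V1 V2 ∧ V1 ∪ V2 = Set.univ ∧
  (∀ u ∈ V1, ∀ v ∈ V1, ¬ A u v) ∧
  (∀ u ∈ V2, ∀ v ∈ V2, u ≠ v → A u v ∨ A v u)

/-- The tuple `(A, s1, t1, s2, t2)` is good: there are vertex-disjoint `(s1,t1)`-
and `(s2,t2)`-paths. -/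
def IsGood {V : Type*} (A : V → V → Prop) (s1 t1 s2 t2 : V) : Prop :=
  ∃ P1 P2 : List V, IsDipathFrom A s1 t1 P1 ∧ IsDipathFrom A s2 t2 P2 ∧
    ∀ v ∈ P1, v ∉ P2

/-- An (s,t)-path `l` is minimal if no (s,t)-path using only vertices of `l`
is shorter than `l`. -/
def IsMinimalDipathFrom {V : Type*} (A : V → V → Prop) (s t : V) (l : List V) : Prop :=
  IsDipathFrom A s t l ∧
    ∀ l2 : List V, IsDipathFrom A s t l2 → (∀ v ∈ l2, v ∈ l) → l.length ≤ l2.length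

/-- `a` is the first vertex of the path `l` (in the order along `l`) lying in `S`. -/
def IsFirstIn {V : Type*} (S : Set V) (l : List V) (a : V) : Prop :=
  ∃ p q : List V, l = p ++ a :: q ∧ a ∈ S ∧ ∀ v ∈ p, v ∉ S

/-- `a` is the last vertex of the path `l` (in the order along `l`) lying in `S`. -/
def IsLastIn {V : Type*} (S : Set V) (l : List V) (a : V) : Prop :=
  ∃ p q : List V, l = p ++ a :: q ∧ a ∈ S ∧ ∀ v ∈ q, v ∉ S

namespace Claim10Helpers
open List
variable {V : Type*}


variable {V : Type*}

lemma head?_eq' (l : List V) (h : 0 < l.length) : l.head? = some l[0] := by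
  rw [List.head?_eq_getElem?, List.getElem?_eq_getElem h]

lemma getLast?_eq' (l : List V) (h : 0 < l.length) : l.getLast? = some l[l.length - 1] := by
  rw [List.getLast?_eq_getElem?, List.getElem?_eq_getElem (by omega)]

lemma arc_consec {A : V → V → Prop} {l : List V} (hc : l.Chain' A) {m : ℕ}
    (h : m + 1 < l.length) : A l[m] l[m+1] := by
  have := List.isChain_iff_getElem.mp hc m (by omega)
  simpa using this

/-- the segment of `l` from index `a` to index `b` inclusive. -/
def seg (l : List V) (a b : ℕ) : List V := (l.drop a).take (b + 1 - a)

lemma seg_length {l : List V} {a b : ℕ} (hab : a ≤ b) (hb : b < l.length) :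
    (seg l a b).length = b + 1 - a := by
  simp [seg]; omega

lemma seg_getElem {l : List V} {a b i : ℕ}
    (hi : i < (seg l a b).length) (hi' : a + i < l.length) :
    (seg l a b)[i] = l[a + i] := by
  simp only [seg]
  rw [List.getElem_take, List.getElem_drop]

lemma seg_infix (l : List V) (a b : ℕ) : seg l a b <:+: l :=
  (List.take_prefix _ _).isInfix.trans (List.drop_suffix _ _).isInfix

lemma getElem_congr' {l : List V} {i j : ℕ} (h : i = j) (hi : i < l.length) :
    l[i] = l[j]'(h ▸ hi) := by subst h; rfl

lemma mem_seg {l : List V} {a b : ℕ} {v : V} (hv : v ∈ seg l a b) :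
    ∃ m, a ≤ m ∧ m ≤ b ∧ ∃ (h : m < l.length), l[m] = v := by
  obtain ⟨i, hi, hieq⟩ := List.mem_iff_getElem.mp hv
  have hlen : (seg l a b).length = min (b + 1 - a) (l.length - a) := by
    simp [seg]
  have hai : a + i < l.length := by omega
  refine ⟨a + i, by omega, by omega, hai, ?_⟩
  rw [← seg_getElem hi hai]; exact hieq

lemma seg_ne_nil {l : List V} {a b : ℕ} (hab : a ≤ b) (hb : b < l.length) :
    seg l a b ≠ [] := by
  have := seg_length hab hb
  intro h; rw [h] at this; simp at this; omega

lemma seg_head? {l : List V} {a b : ℕ} (hab : a ≤ b) (hb : b < l.length) :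
    (seg l a b).head? = some l[a] := by
  rw [head?_eq' _ (by rw [seg_length hab hb]; omega)]
  congr 1
  rw [seg_getElem (by rw [seg_length hab hb]; omega) (by omega)]
  congr 1

lemma seg_getLast? {l : List V} {a b : ℕ} (hab : a ≤ b) (hb : b < l.length) :
    (seg l a b).getLast? = some l[b] := by
  have hL := seg_length hab hb
  rw [getLast?_eq' _ (by omega)]
  congr 1
  have hi : (seg l a b).length - 1 < (seg l a b).length := by omega
  have hai : a + ((seg l a b).length - 1) < l.length := by omega
  rw [seg_getElem hi hai, getElem_congr' (show a + ((seg l a b).length - 1) = b by omega) hai]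

lemma seg_nodup {l : List V} (hl : l.Nodup) (a b : ℕ) : (seg l a b).Nodup :=
  ((seg_infix l a b).sublist).nodup hl

lemma seg_chain' {A : V → V → Prop} {l : List V} (hl : l.Chain' A) (a b : ℕ) :
    (seg l a b).Chain' A := hl.infix (seg_infix l a b)

lemma seg_subset {l : List V} {a b : ℕ} : ∀ v ∈ seg l a b, v ∈ l :=
  fun _ hv => (seg_infix l a b).sublist.subset hv


variable {V : Type*}

lemma splitu {x : V} : ∀ {a c : List V} {b d : List V}, (a ++ x :: b).Nodup →
    a ++ x :: b = c ++ x :: d → a = c ∧ b = d := by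
  intro a
  induction a with
  | nil =>
    intro c b d hnd h2
    cases c with
    | nil => simpa using h2
    | cons y c' =>
      simp only [List.nil_append, List.cons_append, List.cons.injEq] at h2
      obtain ⟨rfl, h2⟩ := h2
      exfalso
      simp only [List.nil_append, List.nodup_cons] at hnd
      exact hnd.1 (by rw [h2]; simp)
  | cons y a' ih =>
    intro c b d hnd h2
    cases c with
    | nil =>
      simp only [List.nil_append, List.cons_append, List.cons.injEq] at h2
      obtain ⟨rfl, h2⟩ := h2
      exfalso
      simp only [List.cons_append, List.nodup_cons] at hnd
      exact hnd.1 (by simp)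
    | cons y' c' =>
      simp only [List.cons_append, List.cons.injEq] at h2
      obtain ⟨rfl, h2⟩ := h2
      have := ih (by simpa using (List.nodup_cons.mp (by simpa using hnd)).2) h2
      exact ⟨by rw [this.1], this.2⟩


open List
variable {V : Type*}

lemma no_chord {A : V → V → Prop} {s t : V} {l : List V}
    (h : IsMinimalDipathFrom A s t l) {a b : ℕ} (hab : a + 2 ≤ b) (hb : b < l.length) :
    ¬ A l[a] l[b] := by
  intro harc
  set l2 := l.take (a+1) ++ l.drop b with hl2
  have hlt : (l.take (a+1)).length = a + 1 := by
    rw [List.length_take]; omega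
  have hld : (l.drop b).length = l.length - b := by rw [List.length_drop]
  have hl2len : l2.length = (a+1) + (l.length - b) := by
    rw [hl2, List.length_append, hlt, hld]
  have h20 : 0 < l2.length := by omega
  have htne : l.take (a+1) ≠ [] := by
    intro hh; rw [hh] at hlt; simp at hlt
  have hdne : l.drop b ≠ [] := by
    intro hh; rw [hh] at hld; simp at hld; omega
  have hsub : l2 <+ l := by
    conv_rhs => rw [← List.take_append_drop (a+1) l]
    refine (List.Sublist.refl _).append ?_
    rw [show b = (a+1) + (b - (a+1)) by omega, ← List.drop_drop]
    exact List.drop_sublist _ _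
  have htlast : (l.take (a+1)).getLast? = some l[a] := by
    rw [getLast?_eq' _ (by omega)]
    congr 1
    have h1 : (l.take (a+1)).length - 1 < (l.take (a+1)).length := by omega
    rw [List.getElem_take, getElem_congr' (show (l.take (a+1)).length - 1 = a by omega)]
  have hdhead : (l.drop b).head? = some l[b] := by
    rw [head?_eq' _ (by omega)]
    congr 1
    rw [List.getElem_drop, getElem_congr' (show b + 0 = b by omega)]
  have hchain : l2.Chain' A := by
    rw [hl2]; refine List.isChain_append.mpr ?_
    refine ⟨h.1.1.2.2.infix (List.take_prefix _ l).isInfix,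
      h.1.1.2.2.infix (List.drop_suffix _ l).isInfix, ?_⟩
    intro x hx y hy
    rw [htlast] at hx; rw [hdhead] at hy
    simp only [Option.mem_def, Option.some.injEq] at hx hy
    rw [← hx, ← hy]; exact harc
  have hl0 : 0 < l.length := by omega
  have hhead : l2.head? = l.head? := by
    rw [head?_eq' _ h20, head?_eq' _ hl0]
    congr 1
    show (l.take (a+1) ++ l.drop b)[0]'(by rw [List.length_append, hlt, hld]; omega) = l[0]
    rw [List.getElem_append_left (by omega), List.getElem_take]
  have hlast : l2.getLast? = l.getLast? := by
    rw [getLast?_eq' _ h20, getLast?_eq' _ hl0]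
    congr 1
    show (l.take (a+1) ++ l.drop b)[l2.length - 1]'(by rw [List.length_append, hlt, hld]; omega) = l[l.length - 1]
    rw [List.getElem_append_right (by rw [hlt]; omega)]
    rw [List.getElem_drop,
      getElem_congr' (show b + (l2.length - 1 - (l.take (a+1)).length) = l.length - 1 by
        rw [hlt]; omega)]
  have := h.2 l2 ⟨⟨by
      intro hh; rw [hh] at h20; simp at h20, hsub.nodup h.1.1.2.1, hchain⟩,
      by rw [hhead]; exact h.1.2.1, by rw [hlast]; exact h.1.2.2⟩
    (fun v hv => hsub.subset hv)
  omega


open List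
variable {V : Type*}

lemma head?_append_ne {l l' : List V} (h : l ≠ []) : (l ++ l').head? = l.head? := by
  rw [List.head?_append]
  cases hl : l.head? with
  | none => exact absurd (List.head?_eq_none_iff.mp hl) h
  | some a => rfl

lemma getLast?_append_ne (l : List V) {l' : List V} (h : l' ≠ []) :
    (l ++ l').getLast? = l'.getLast? := by
  rw [List.getLast?_append]
  cases hl : l'.getLast? with
  | none => exact absurd (List.getLast?_eq_none_iff.mp hl) h
  | some a => rfl

lemma build {A : V → V → Prop} {s1 t1 s2 t2 : V} {S : Set V}
    {Pl Qc Qd : List V} {zc wd : V} {M : List V}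
    (hPl : IsDipathFrom A s1 t1 Pl)
    (hQc : IsDipathFrom A s2 t2 Qc)
    (hQd : IsDipathFrom A s2 t2 Qd)
    (hQcd : Qc = Qd ∨ (∀ v, v ∈ Qc → v ∈ Qd → v = s2 ∨ v = t2))
    (hQc1 : ∀ v ∈ Qc, v ≠ s1 ∧ v ≠ t1)
    (hQd1 : ∀ v ∈ Qd, v ≠ s1 ∧ v ≠ t1)
    (hfz : IsFirstIn S Qc zc) (hlw : IsLastIn S Qd wd)
    (hs2S : s2 ∉ S) (ht2S : t2 ∉ S)
    (hMnd : M.Nodup) (hMc : M.Chain' A) (hMh : M.head? = some zc)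
    (hMl : M.getLast? = some wd)
    (hMS : ∀ v ∈ M, v ∈ S) (hMPl : ∀ v ∈ M, v ∉ Pl)
    (hPlS : ∀ v ∈ Pl, v ∉ S → v = s1 ∨ v = t1) :
    IsGood A s1 t1 s2 t2 := by
  obtain ⟨p, q, hQceq, hzS, hpS⟩ := hfz
  obtain ⟨p', q', hQdeq, hwS, hq'S⟩ := hlw
  obtain ⟨⟨hQcne, hQcnd, hQcch⟩, hQch, hQcl⟩ := hQc
  obtain ⟨⟨hQdne, hQdnd, hQdch⟩, hQdh, hQdl⟩ := hQd
  have hMne : M ≠ [] := by intro h; rw [h] at hMh; simp at hMh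
  -- p nonempty
  have hpne : p ≠ [] := by
    intro h
    rw [hQceq, h, List.nil_append] at hQch
    simp at hQch
    exact hs2S (hQch ▸ hzS)
  -- q' nonempty
  have hq'ne : q' ≠ [] := by
    intro h
    rw [hQdeq, h, getLast?_append_ne _ (by simp)] at hQdl
    simp at hQdl
    exact ht2S (hQdl ▸ hwS)
  -- nodup pieces of Qc, Qd
  rw [hQceq] at hQcnd hQcch hQch hQcl
  rw [hQdeq] at hQdnd hQdch hQdh hQdl
  have hQcnd' := List.nodup_append'.mp hQcnd
  have hQdnd' := List.nodup_append'.mp hQdnd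
  have hpdisj : ∀ v ∈ p, v ∉ zc :: q := fun v hv hv' => hQcnd'.2.2 hv hv'
  have hq'nd : q'.Nodup := (List.nodup_cons.mp hQdnd'.2.1).2
  -- chain links
  have hQcch' := List.isChain_append.mp hQcch
  have hQdch' := List.isChain_append.mp hQdch
  have hlink1 : ∀ x ∈ p.getLast?, A x zc := by
    intro x hx
    exact hQcch'.2.2 x hx zc (by simp)
  have hlink2 : ∀ y ∈ q'.head?, A wd y := fun y hy => ((List.isChain_append (l₁ := [wd]) (l₂ := q')).mp hQdch'.2.1).2.2 wd rfl y hy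
  -- disjointness p vs q'
  have hpq' : ∀ v ∈ p, v ∉ q' := by
    rcases hQcd with heq | hdisj
    · -- same Q
      have hwQc : wd ∈ p ++ zc :: q := by
        rw [← hQceq, heq, hQdeq]; simp
      have hwp : wd ∉ p := fun h => hpS wd h hwS
      have hwzq : wd ∈ zc :: q := by
        rcases List.mem_append.mp hwQc with h | h
        · exact absurd h hwp
        · exact h
      obtain ⟨r, r', hrr⟩ := List.append_of_mem hwzq
      have hQceq2 : Qc = (p ++ r) ++ wd :: r' := by
        rw [hQceq, hrr]; simp
      have heq2 : (p ++ r) ++ wd :: r' = p' ++ wd :: q' := by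
        rw [List.append_assoc, ← hrr, ← hQceq, heq, hQdeq]
      have hnd2 : ((p ++ r) ++ wd :: r').Nodup := by
        rw [List.append_assoc, ← hrr]; exact hQcnd
      have hsp := splitu hnd2 heq2
      intro v hv hv'
      rw [← hsp.2] at hv'
      exact hpdisj v hv (by rw [hrr]; exact List.mem_append_right _ (List.mem_cons_of_mem _ hv'))
    · intro v hv hv'
      have hvQc : v ∈ Qc := by rw [hQceq]; exact List.mem_append_left _ hv
      have hvQd : v ∈ Qd := by rw [hQdeq]; simp [hv']
      rcases hdisj v hvQc hvQd with hv2 | hv2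
      · -- v = s2 ∈ q'
        have hs2q' : s2 ∈ q' := hv2 ▸ hv'
        cases hp' : p' with
        | nil =>
          rw [hp', List.nil_append] at hQdh
          simp at hQdh
          exact hs2S (hQdh ▸ hwS)
        | cons h t =>
          rw [hp', head?_append_ne (by simp)] at hQdh
          simp at hQdh
          exact hQdnd'.2.2 (by rw [hp']; simp [hQdh]) (List.mem_cons_of_mem _ hs2q')
      · -- v = t2 ∈ p
        have ht2p : t2 ∈ p := hv2 ▸ hv
        rw [getLast?_append_ne _ (by simp)] at hQcl
        exact hpdisj t2 ht2p (List.mem_of_mem_getLast? hQcl)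
  -- the route
  set R := p ++ (M ++ q') with hR
  have hRne : R ≠ [] := by
    rw [hR]; intro h; exact hpne (List.append_eq_nil_iff.mp h).1
  have hRnd : R.Nodup := by
    rw [hR, List.nodup_append']
    refine ⟨hQcnd'.1, ?_, ?_⟩
    · rw [List.nodup_append']
      exact ⟨hMnd, hq'nd, fun v hv hv' => hq'S v hv' (hMS v hv)⟩
    · intro v hv hv'
      rcases List.mem_append.mp hv' with h | h
      · exact hpS v hv (hMS v h)
      · exact hpq' v hv h
  have hRch : R.Chain' A := by
    rw [hR]; refine List.isChain_append.mpr ?_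
    refine ⟨hQcch'.1, ?_, ?_⟩
    · refine List.isChain_append.mpr ?_
      refine ⟨hMc, ((List.isChain_append (l₁ := [wd]) (l₂ := q')).mp hQdch'.2.1).2.1, ?_⟩
      intro x hx y hy
      rw [hMl] at hx; simp at hx
      exact hx ▸ hlink2 y hy
    · intro x hx y hy
      rw [head?_append_ne hMne, hMh] at hy
      simp at hy
      exact hy ▸ hlink1 x hx
  have hRh : R.head? = some s2 := by
    rw [hR, head?_append_ne hpne, ← head?_append_ne (l := p) (l' := zc :: q) hpne]
    exact hQch
  have hRl : R.getLast? = some t2 := by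
    rw [getLast?_append_ne _ (by simp)] at hQdl
    rw [show wd :: q' = [wd] ++ q' from rfl, getLast?_append_ne _ hq'ne] at hQdl
    rw [hR, getLast?_append_ne _ (by
      intro h; exact hq'ne (List.append_eq_nil_iff.mp h).2),
      getLast?_append_ne _ hq'ne]
    exact hQdl
  refine ⟨Pl, R, hPl, ⟨⟨hRne, hRnd, hRch⟩, hRh, hRl⟩, ?_⟩
  intro v hvPl hvR
  rw [hR] at hvR
  rcases List.mem_append.mp hvR with h | h
  · have hvQc : v ∈ Qc := by rw [hQceq]; exact List.mem_append_left _ h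
    rcases hPlS v hvPl (hpS v h) with rfl | rfl
    · exact (hQc1 v hvQc).1 rfl
    · exact (hQc1 v hvQc).2 rfl
  rcases List.mem_append.mp h with h | h
  · exact hMPl v h hvPl
  · have hvQd : v ∈ Qd := by rw [hQdeq]; simp [h]
    rcases hPlS v hvPl (hq'S v h) with rfl | rfl
    · exact (hQd1 v hvQd).1 rfl
    · exact (hQd1 v hvQd).2 rfl


end Claim10Helpers

open Claim10Helpers in
/-- Claim 10 of the paper: under the hypotheses of Case 3 (each P i carries
exactly one z j and exactly one w j), every P i has exactly five vertices,
P i = s1 → a → y → b → t1 with a, b ∈ V1 and y ∈ V2. -/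
theorem stmt_15 {V : Type*} [Fintype V] [DecidableEq V]
    (A : V → V → Prop) (V1 V2 : Set V)
    (hloop : IsLoopless A) (hsplit : IsSplitDigraph A V1 V2)
    (hsemi : ∀ u ∈ V1, ∀ v ∈ V2, A u v ∨ A v u)
    (s1 s2 t1 t2 : V) (hdist : ([s1, s2, t1, t2] : List V).Nodup)
    (P Q : Fin 3 → List V)
    (hP : ∀ i, IsMinimalDipathFrom A s1 t1 (P i) ∧
            ∀ v ∈ P i, v ∉ ({s2, t2} : Set V))
    (hPdisj : ∀ i j, i ≠ j → ∀ v, v ∈ P i → v ∈ P j → v = s1 ∨ v = t1)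
    (hQ : ∀ i, IsMinimalDipathFrom A s2 t2 (Q i) ∧
            ∀ v ∈ Q i, v ∉ ({s1, t1} : Set V))
    (hQdisj : ∀ i j, i ≠ j → ∀ v, v ∈ Q i → v ∈ Q j → v = s2 ∨ v = t2)
    (hbad : ¬ IsGood A s1 t1 s2 t2)
    (S : Set V)
    (hS : S = {v | (v ∈ P 0 ∨ v ∈ P 1 ∨ v ∈ P 2) ∧ v ≠ s1 ∧ v ≠ t1})
    (z w : Fin 3 → V)
    (hz : ∀ i, IsFirstIn S (Q i) (z i))
    (hw : ∀ i, IsLastIn S (Q i) (w i))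
    (hz1 : ∀ i : Fin 3, ∃! j : Fin 3, z j ∈ P i)
    (hw1 : ∀ i : Fin 3, ∃! j : Fin 3, w j ∈ P i) :
    ∀ i : Fin 3, (P i).length = 5 ∧
      ∃ a y b : V, P i = [s1, a, y, b, t1] ∧ a ∈ V1 ∧ b ∈ V1 ∧ y ∈ V2 := by
  
  classical
  obtain ⟨hV1ne, hV2ne, hV12, hV12U, hV1noarc, hV2semi⟩ := hsplit
  -- basic set facts
  have hV1or : ∀ v : V, v ∈ V1 ∨ v ∈ V2 := by
    intro v
    have : v ∈ V1 ∪ V2 := by rw [hV12U]; trivial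
    simpa [Set.mem_union] using this
  have dich : ∀ x y : V, x ≠ y → (x ∉ V1 ∨ y ∉ V1) → A x y ∨ A y x := by
    intro x y hxy h
    rcases hV1or x with hx | hx <;> rcases hV1or y with hy | hy
    · exfalso; rcases h with h | h <;> exact h ‹_›
    · exact hsemi x hx y hy
    · exact (hsemi y hy x hx).symm
    · exact hV2semi x hx y hy hxy
  have hV2of : ∀ v : V, v ∉ V1 → v ∈ V2 := by
    intro v hv
    rcases hV1or v with h | h
    · exact absurd h hv
    · exact h
  have hs1t1 : s1 ≠ t1 := by simp at hdist; tauto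
  have hs2S : s2 ∉ S := by
    rw [hS]
    rintro ⟨hmem, -, -⟩
    rcases hmem with h | h | h
    · exact (hP 0).2 s2 h (by simp)
    · exact (hP 1).2 s2 h (by simp)
    · exact (hP 2).2 s2 h (by simp)
  have ht2S : t2 ∉ S := by
    rw [hS]
    rintro ⟨hmem, -, -⟩
    rcases hmem with h | h | h
    · exact (hP 0).2 t2 h (by simp)
    · exact (hP 1).2 t2 h (by simp)
    · exact (hP 2).2 t2 h (by simp)
  have hmemS : ∀ (j : Fin 3) (v : V), v ∈ P j → v ≠ s1 → v ≠ t1 → v ∈ S := by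
    intro j v hv h1 h2
    rw [hS]
    refine ⟨?_, h1, h2⟩
    fin_cases j
    · exact Or.inl hv
    · exact Or.inr (Or.inl hv)
    · exact Or.inr (Or.inr hv)
  have hQ1 : ∀ (c : Fin 3) (v : V), v ∈ Q c → v ≠ s1 ∧ v ≠ t1 := by
    intro c v hv
    have := (hQ c).2 v hv
    simp only [Set.mem_insert_iff, Set.mem_singleton_iff] at this
    exact ⟨fun h => this (Or.inl h), fun h => this (Or.inr h)⟩
  have hQQcd : ∀ c d : Fin 3, Q c = Q d ∨ (∀ v, v ∈ Q c → v ∈ Q d → v = s2 ∨ v = t2) := by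
    intro c d
    by_cases h : c = d
    · exact Or.inl (by rw [h])
    · exact Or.inr (hQdisj c d h)
  -- every Q meets the interior of every P
  have hQPmeet : ∀ (c j : Fin 3), ∃ x, x ∈ Q c ∧ x ∈ P j ∧ x ≠ s1 ∧ x ≠ t1 := by
    intro c j
    by_contra hno
    push_neg at hno
    refine hbad ⟨P j, Q c, (hP j).1.1, (hQ c).1.1, ?_⟩
    intro v hv hv'
    have h1 := hQ1 c v hv'
    exact h1.2 (hno v hv' hv h1.1)
  intro i
  
  -- basic path facts for P i
  have hPine : P i ≠ [] := (hP i).1.1.1.1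
  have hPind : (P i).Nodup := (hP i).1.1.1.2.1
  have hPich : (P i).Chain' A := (hP i).1.1.1.2.2
  have hPih : (P i).head? = some s1 := (hP i).1.1.2.1
  have hPil : (P i).getLast? = some t1 := (hP i).1.1.2.2
  have hlen0 : 0 < (P i).length := List.length_pos_iff.mpr hPine
  have hl0 : (P i)[0] = s1 := by
    rw [head?_eq' _ hlen0] at hPih; exact Option.some.inj hPih
  have hlK : (P i)[(P i).length - 1] = t1 := by
    rw [getLast?_eq' _ hlen0] at hPil; exact Option.some.inj hPil
  have hinj : ∀ {a b : ℕ} (ha : a < (P i).length) (hb : b < (P i).length),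
      (P i)[a] = (P i)[b] → a = b := by
    intro a b ha hb h
    exact (hPind.getElem_inj_iff).mp h
  -- length at least 5
  choose x hxQ hxP hxs1 hxt1 using fun c => hQPmeet c i
  have hxdist : ∀ c c' : Fin 3, c ≠ c' → x c ≠ x c' := by
    intro c c' hcc' heq
    rcases hQdisj c c' hcc' (x c) (hxQ c) (heq ▸ hxQ c') with h | h
    · exact (hP i).2 (x c) (hxP c) (by simp [h])
    · exact (hP i).2 (x c) (hxP c) (by simp [h])
  have hs1P : s1 ∈ P i := hl0 ▸ List.getElem_mem hlen0
  have ht1P : t1 ∈ P i := hlK ▸ List.getElem_mem (by omega)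
  have hlist5 : ([s1, t1, x 0, x 1, x 2] : List V).Nodup := by
    have d1 : x 0 ≠ x 1 := hxdist 0 1 (by decide)
    have d2 : x 0 ≠ x 2 := hxdist 0 2 (by decide)
    have d3 : x 1 ≠ x 2 := hxdist 1 2 (by decide)
    simp [List.nodup_cons, hs1t1, Ne.symm (hxs1 0), Ne.symm (hxs1 1), Ne.symm (hxs1 2),
      Ne.symm (hxt1 0), Ne.symm (hxt1 1), Ne.symm (hxt1 2), d1, d2, d3]
  have hlen5 : 5 ≤ (P i).length := by
    have h1 : ([s1, t1, x 0, x 1, x 2] : List V).toFinset.card = 5 := by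
      rw [List.toFinset_card_of_nodup hlist5]; rfl
    have h2 : ([s1, t1, x 0, x 1, x 2] : List V).toFinset ⊆ (P i).toFinset := by
      intro v hv
      simp only [List.mem_toFinset] at hv ⊢
      simp only [List.mem_cons, List.not_mem_nil, or_false] at hv
      rcases hv with h | h | h | h | h
      · exact h ▸ hs1P
      · exact h ▸ ht1P
      · exact h ▸ hxP 0
      · exact h ▸ hxP 1
      · exact h ▸ hxP 2
    calc 5 = ([s1, t1, x 0, x 1, x 2] : List V).toFinset.card := h1.symm
      _ ≤ (P i).toFinset.card := Finset.card_le_card h2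
      _ ≤ (P i).length := (P i).toFinset_card_le
  -- positions of z and w on P i
  obtain ⟨c, hzcP, -⟩ := hz1 i
  obtain ⟨d, hwdP, -⟩ := hw1 i
  have hzcS : z c ∈ S := by obtain ⟨p, q, -, h, -⟩ := hz c; exact h
  have hwdS : w d ∈ S := by obtain ⟨p, q, -, h, -⟩ := hw d; exact h
  have hzs1 : z c ≠ s1 := by rw [hS] at hzcS; exact hzcS.2.1
  have hzt1 : z c ≠ t1 := by rw [hS] at hzcS; exact hzcS.2.2
  have hws1 : w d ≠ s1 := by rw [hS] at hwdS; exact hwdS.2.1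
  have hwt1 : w d ≠ t1 := by rw [hS] at hwdS; exact hwdS.2.2
  obtain ⟨vz, hvzlt, hvzeq⟩ := List.mem_iff_getElem.mp hzcP
  obtain ⟨uw, huwlt, huweq⟩ := List.mem_iff_getElem.mp hwdP
  have hvz0 : vz ≠ 0 := by
    intro h
    exact hzs1 (by rw [← hvzeq, getElem_congr' h hvzlt]; exact hl0)
  have hvzK : vz ≠ (P i).length - 1 := by
    intro h
    exact hzt1 (by rw [← hvzeq, getElem_congr' h hvzlt]; exact hlK)
  have huw0 : uw ≠ 0 := by
    intro h
    exact hws1 (by rw [← huweq, getElem_congr' h huwlt]; exact hl0)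
  have huwK : uw ≠ (P i).length - 1 := by
    intro h
    exact hwt1 (by rw [← huweq, getElem_congr' h huwlt]; exact hlK)
  -- a second path index
  have hj3ex : ∃ j : Fin 3, j ≠ i := by
    by_cases h0 : i = 0
    · exact ⟨1, by rw [h0]; decide⟩
    · exact ⟨0, fun h => h0 h.symm⟩
  obtain ⟨j3, hj3⟩ := hj3ex
  -- interior vertices of P i
  have hint : ∀ m (hm : m < (P i).length), 1 ≤ m → m ≤ (P i).length - 2 →
      (P i)[m] ∈ S ∧ (P i)[m] ∉ P j3 := by
    intro m hm h1 h2
    have hmem : (P i)[m] ∈ P i := List.getElem_mem hm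
    have hne1 : (P i)[m] ≠ s1 := by
      intro h
      have := hinj hm hlen0 (by rw [h, hl0])
      omega
    have hne2 : (P i)[m] ≠ t1 := by
      intro h
      have := hinj hm (show (P i).length - 1 < (P i).length by omega)
        (by rw [h, hlK])
      omega
    refine ⟨hmemS i _ hmem hne1 hne2, ?_⟩
    intro hmem3
    rcases hPdisj i j3 (Ne.symm hj3) _ hmem hmem3 with h | h
    · exact hne1 h
    · exact hne2 h
  have hsegSP : ∀ a b : ℕ, 1 ≤ a → b ≤ (P i).length - 2 →
      (∀ v ∈ seg (P i) a b, v ∈ S) ∧ (∀ v ∈ seg (P i) a b, v ∉ P j3) := by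
    intro a b ha hb
    constructor <;> intro v hv <;> obtain ⟨m, hm1, hm2, hm3, rfl⟩ := mem_seg hv
    · exact (hint m hm3 (by omega) (by omega)).1
    · exact (hint m hm3 (by omega) (by omega)).2
  -- the route builder
  have hbuild : ∀ M : List V, M.Nodup → M.Chain' A → M.head? = some (z c) →
      M.getLast? = some (w d) → (∀ v ∈ M, v ∈ S) → (∀ v ∈ M, v ∉ P j3) → False := by
    intro M h1 h2 h3 h4 h5 h6
    refine hbad (build (hP j3).1.1 (hQ c).1.1 (hQ d).1.1 (hQQcd c d)
      (fun v hv => hQ1 c v hv) (fun v hv => hQ1 d v hv) (hz c) (hw d) hs2S ht2S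
      h1 h2 h3 h4 h5 h6 ?_)
    intro v hv hvS
    by_cases e1 : v = s1
    · exact Or.inl e1
    by_cases e2 : v = t1
    · exact Or.inr e2
    exact absurd (hmemS j3 v hv e1 e2) hvS
  -- w comes strictly before z on P i
  have hG1 : uw < vz := by
    by_contra hcon
    push_neg at hcon
    refine hbuild (seg (P i) vz uw) (seg_nodup hPind _ _) (seg_chain' hPich _ _)
      ?_ ?_ (hsegSP vz uw (by omega) (by omega)).1 (hsegSP vz uw (by omega) (by omega)).2
    · rw [seg_head? hcon huwlt, hvzeq]
    · rw [seg_getLast? hcon huwlt, huweq]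
  have hvzlt2 : vz ≤ (P i).length - 2 := by omega
  have huwge : 1 ≤ uw := by omega
  -- no arc from the tail region to the head region
  have hG2 : ∀ xi yi (hxi : xi < (P i).length) (hyi : yi < (P i).length),
      vz ≤ xi → xi ≤ (P i).length - 2 → 1 ≤ yi → yi ≤ uw → ¬ A (P i)[xi] (P i)[yi] := by
    intro xi yi hxi hyi h1 h2 h3 h4 harc
    refine hbuild (seg (P i) vz xi ++ seg (P i) yi uw) ?_ ?_ ?_ ?_ ?_ ?_
    · rw [List.nodup_append']
      refine ⟨seg_nodup hPind _ _, seg_nodup hPind _ _, ?_⟩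
      intro v hv hv'
      obtain ⟨m1, hm11, hm12, hm13, hveq1⟩ := mem_seg hv
      obtain ⟨m2, hm21, hm22, hm23, hveq2⟩ := mem_seg hv'
      have : m1 = m2 := hinj hm13 hm23 (by rw [hveq1, hveq2])
      omega
    · refine List.isChain_append.mpr ?_
      refine ⟨seg_chain' hPich _ _, seg_chain' hPich _ _, ?_⟩
      intro a ha b hb
      rw [seg_getLast? h1 hxi] at ha
      rw [seg_head? (show yi ≤ uw from h4) huwlt] at hb
      simp only [Option.mem_def, Option.some.injEq] at ha hb
      rw [← ha, ← hb]
      exact harc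
    · rw [head?_append_ne (seg_ne_nil h1 hxi), seg_head? h1 hxi, hvzeq]
    · rw [getLast?_append_ne _ (seg_ne_nil h4 huwlt), seg_getLast? h4 huwlt, huweq]
    · intro v hv
      rcases List.mem_append.mp hv with h | h
      · exact (hsegSP vz xi (by omega) (by omega)).1 v h
      · exact (hsegSP yi uw (by omega) (by omega)).1 v h
    · intro v hv
      rcases List.mem_append.mp hv with h | h
      · exact (hsegSP vz xi (by omega) (by omega)).2 v h
      · exact (hsegSP yi uw (by omega) (by omega)).2 v h
  have hchord : ∀ a b (hb : b < (P i).length) (hab : a + 2 ≤ b),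
      ¬ A ((P i)[a]'(by omega)) (P i)[b] :=
    fun a b hb hab => no_chord (hP i).1 hab hb
  have hC1 : ∀ xi yi (hxi : xi < (P i).length) (hyi : yi < (P i).length),
      vz ≤ xi → xi ≤ (P i).length - 2 → 1 ≤ yi → yi ≤ uw → yi + 2 ≤ xi →
      (P i)[xi] ∈ V1 ∧ (P i)[yi] ∈ V1 := by
    intro xi yi hxi hyi h1 h2 h3 h4 h5
    by_contra hcon
    have hne : (P i)[xi] ≠ (P i)[yi] := by
      intro h
      have := hinj hxi hyi h
      omega
    rcases dich _ _ hne (by tauto) with h | h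
    · exact hG2 xi yi hxi hyi h1 h2 h3 h4 h
    · exact hchord yi xi hxi h5 h
  have hadj : ∀ m (h : m + 1 < (P i).length), ¬((P i)[m] ∈ V1 ∧ (P i)[m+1] ∈ V1) := by
    rintro m h ⟨h1, h2⟩
    exact hV1noarc _ h1 _ h2 (arc_consec hPich h)
  -- the key structural fact
  have hkey : (P i).length = 5 ∧ (P i)[1]'(by omega) ∈ V1 ∧ (P i)[2]'(by omega) ∉ V1 ∧
      (P i)[3]'(by omega) ∈ V1 := by
    have hEq : ∀ (m : ℕ) (hm : m < (P i).length), m = vz → (P i)[m] = z c := by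
      intro m hm h
      rw [getElem_congr' h hm]; exact hvzeq
    have hEw : ∀ (m : ℕ) (hm : m < (P i).length), m = uw → (P i)[m] = w d := by
      intro m hm h
      rw [getElem_congr' h hm]; exact huweq
    by_cases hzV1 : z c ∈ V1
    · by_cases hwV1 : w d ∈ V1
      · -- Case C : both ends in V1
        have hwel : (P i)[uw] ∈ V1 := by rw [huweq]; exact hwV1
        have hzel : (P i)[vz] ∈ V1 := by rw [hvzeq]; exact hzV1
        have huw1 : uw = 1 := by
          by_contra hcc
          have h1V : (P i)[1] ∈ V1 :=
            (hC1 vz 1 hvzlt (by omega) le_rfl hvzlt2 le_rfl huwge (by omega)).2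
          by_cases h4 : 4 ≤ vz
          · have h2V : (P i)[2] ∈ V1 :=
              (hC1 vz 2 hvzlt (by omega) le_rfl hvzlt2 (by omega) (by omega) (by omega)).2
            exact hadj 1 (by omega) ⟨h1V, h2V⟩
          · have h2V : (P i)[2] ∈ V1 := by
              rw [hEw 2 (by omega) (by omega)]; exact hwV1
            exact hadj 1 (by omega) ⟨h1V, h2V⟩
        have hvzk : vz = (P i).length - 2 := by
          by_contra hcc
          have hKV : (P i)[(P i).length - 2] ∈ V1 :=
            (hC1 ((P i).length - 2) 1 (by omega) (by omega) (by omega) le_rfl le_rfl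
              (by omega) (by omega)).1
          by_cases h6 : 6 ≤ (P i).length
          · have hK1V : (P i)[(P i).length - 3] ∈ V1 :=
              (hC1 ((P i).length - 3) 1 (by omega) (by omega) (by omega) (by omega) le_rfl
                (by omega) (by omega)).1
            refine hadj ((P i).length - 3) (by omega) ⟨hK1V, ?_⟩
            rw [getElem_congr' (show (P i).length - 3 + 1 = (P i).length - 2 by omega) (by omega)]
            exact hKV
          · have h1V : (P i)[1] ∈ V1 := by
              rw [hEw 1 (by omega) (by omega)]; exact hwV1
            have h2V : (P i)[2] ∈ V1 := by
              rw [hEq 2 (by omega) (by omega)]; exact hzV1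
            exact hadj 1 (by omega) ⟨h1V, h2V⟩
        have h1V : (P i)[1] ∈ V1 := by
          rw [hEw 1 (by omega) (by omega)]; exact hwV1
        have h2V2 : (P i)[2] ∉ V1 := fun h => hadj 1 (by omega) ⟨h1V, h⟩
        have hL : (P i).length = 5 := by
          by_contra hcc
          have h6 : 6 ≤ (P i).length := by omega
          have hk3V2 : (P i)[(P i).length - 3] ∉ V1 := by
            intro h
            refine hadj ((P i).length - 3) (by omega) ⟨h, ?_⟩
            rw [getElem_congr' (show (P i).length - 3 + 1 = vz by omega) (by omega)]
            exact hzel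
          have harc1 : A ((P i)[(P i).length - 2]'(by omega)) ((P i)[2]'(by omega)) := by
            have hne : (P i)[(P i).length - 2]'(by omega) ≠ (P i)[2]'(by omega) := by
              intro h
              have := hinj (by omega) (by omega) h
              omega
            rcases dich _ _ hne (Or.inr h2V2) with h | h
            · exact h
            · exact absurd h (hchord 2 ((P i).length - 2) (by omega) (by omega))
          have hnoarc : ¬ A ((P i)[(P i).length - 3]'(by omega)) ((P i)[1]'(by omega)) := by
            intro harc2
            refine hbuild (seg (P i) vz vz ++ (seg (P i) 2 ((P i).length - 3) ++ seg (P i) 1 1))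
              ?_ ?_ ?_ ?_ ?_ ?_
            · rw [List.nodup_append', List.nodup_append']
              refine ⟨seg_nodup hPind _ _, ⟨seg_nodup hPind _ _, seg_nodup hPind _ _, ?_⟩, ?_⟩
              · intro v hv hv'
                obtain ⟨m1, hm11, hm12, hm13, hveq1⟩ := mem_seg hv
                obtain ⟨m2, hm21, hm22, hm23, hveq2⟩ := mem_seg hv'
                have := hinj hm13 hm23 (by rw [hveq1, hveq2])
                omega
              · intro v hv hv'
                obtain ⟨m1, hm11, hm12, hm13, hveq1⟩ := mem_seg hv
                rcases List.mem_append.mp hv' with h | h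
                · obtain ⟨m2, hm21, hm22, hm23, hveq2⟩ := mem_seg h
                  have := hinj hm13 hm23 (by rw [hveq1, hveq2])
                  omega
                · obtain ⟨m2, hm21, hm22, hm23, hveq2⟩ := mem_seg h
                  have := hinj hm13 hm23 (by rw [hveq1, hveq2])
                  omega
            · refine List.isChain_append.mpr ?_
              refine ⟨seg_chain' hPich _ _, ?_, ?_⟩
              · refine List.isChain_append.mpr ?_
                refine ⟨seg_chain' hPich _ _, seg_chain' hPich _ _, ?_⟩
                intro a ha b hb
                rw [seg_getLast? (by omega) (by omega)] at ha
                rw [seg_head? le_rfl (by omega)] at hb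
                simp only [Option.mem_def, Option.some.injEq] at ha hb
                rw [← ha, ← hb]
                exact harc2
              · intro a ha b hb
                rw [seg_getLast? le_rfl hvzlt] at ha
                rw [head?_append_ne (seg_ne_nil (by omega) (by omega)),
                  seg_head? (by omega) (by omega)] at hb
                simp only [Option.mem_def, Option.some.injEq] at ha hb
                rw [← ha, ← hb]
                rw [getElem_congr' (show vz = (P i).length - 2 from hvzk) hvzlt]
                exact harc1
            · rw [head?_append_ne (seg_ne_nil le_rfl hvzlt), seg_head? le_rfl hvzlt, hvzeq]
            · have hne2 : seg (P i) 2 ((P i).length - 3) ++ seg (P i) 1 1 ≠ [] := by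
                intro hh
                exact seg_ne_nil le_rfl (show (1:ℕ) < (P i).length by omega)
                  (List.append_eq_nil_iff.mp hh).2
              rw [getLast?_append_ne _ hne2,
                getLast?_append_ne _ (seg_ne_nil le_rfl (by omega)),
                seg_getLast? le_rfl (by omega), hEw 1 (by omega) (by omega)]
            · intro v hv
              rcases List.mem_append.mp hv with h | h
              · exact (hsegSP vz vz (by omega) (by omega)).1 v h
              · rcases List.mem_append.mp h with h | h
                · exact (hsegSP 2 ((P i).length - 3) (by omega) (by omega)).1 v h
                · exact (hsegSP 1 1 (by omega) (by omega)).1 v h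
            · intro v hv
              rcases List.mem_append.mp hv with h | h
              · exact (hsegSP vz vz (by omega) (by omega)).2 v h
              · rcases List.mem_append.mp h with h | h
                · exact (hsegSP 2 ((P i).length - 3) (by omega) (by omega)).2 v h
                · exact (hsegSP 1 1 (by omega) (by omega)).2 v h
          have hne : (P i)[(P i).length - 3]'(by omega) ≠ (P i)[1]'(by omega) := by
            intro h
            have := hinj (by omega) (by omega) h
            omega
          rcases dich _ _ hne (Or.inl hk3V2) with h | h
          · exact hnoarc h
          · exact absurd h (hchord 1 ((P i).length - 3) (by omega) (by omega))
        refine ⟨hL, h1V, h2V2, ?_⟩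
        rw [hEq 3 (by omega) (by omega)]
        exact hzV1
      · -- Case B : z ∈ V1, w ∈ V2
        have hwel : (P i)[uw] ∉ V1 := by rw [huweq]; exact hwV1
        have hnoLate : ∀ xi (hxi : xi < (P i).length), vz ≤ xi → xi ≤ (P i).length - 2 →
            xi ≤ uw + 1 := by
          intro xi hxi h1 h2
          by_contra hcc
          have hne : (P i)[uw] ≠ (P i)[xi] := by
            intro h
            have := hinj huwlt hxi h
            omega
          rcases dich _ _ hne (Or.inl hwel) with h | h
          · exact hchord uw xi hxi (by omega) h
          · exact hG2 xi uw hxi huwlt h1 h2 huwge le_rfl h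
        have hvzuw : vz = uw + 1 := by
          have := hnoLate vz hvzlt le_rfl hvzlt2
          omega
        have hvzK2 : vz = (P i).length - 2 := by
          have h1 := hnoLate ((P i).length - 2) (by omega) (by omega) le_rfl
          omega
        have hyV1 : ∀ yi (hyi : yi < (P i).length), 1 ≤ yi → yi + 2 ≤ (P i).length - 2 →
            (P i)[yi] ∈ V1 :=
          fun yi hyi h1 h2 =>
            (hC1 ((P i).length - 2) yi (by omega) hyi (by omega) le_rfl h1 (by omega) h2).2
        have hL : (P i).length = 5 := by
          by_contra hcc
          exact hadj 1 (by omega) ⟨hyV1 1 (by omega) le_rfl (by omega),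
            hyV1 2 (by omega) (by omega) (by omega)⟩
        refine ⟨hL, hyV1 1 (by omega) le_rfl (by omega), ?_, ?_⟩
        · rw [hEw 2 (by omega) (by omega)]
          exact hwV1
        · rw [hEq 3 (by omega) (by omega)]
          exact hzV1
    · -- Case A : z ∈ V2
      have hvz2 : vz = 2 := by
        by_contra hcc
        exact hzV1 (by
          rw [← hvzeq]
          exact (hC1 vz 1 hvzlt (by omega) le_rfl hvzlt2 le_rfl huwge (by omega)).1)
      have huw1 : uw = 1 := by omega
      have h13 := hC1 3 1 (by omega) (by omega) (by omega) (by omega) le_rfl (by omega) (by omega)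
      have hL : (P i).length = 5 := by
        by_contra hcc
        have h4V := (hC1 4 1 (by omega) (by omega) (by omega) (by omega) le_rfl (by omega)
          (by omega)).1
        exact hadj 3 (by omega) ⟨h13.1, h4V⟩
      refine ⟨hL, h13.2, ?_, h13.1⟩
      rw [hEq 2 (by omega) (by omega)]
      exact hzV1

  obtain ⟨hL5, h1V, h2V, h3V⟩ := hkey
  refine ⟨hL5, (P i)[1]'(by omega), (P i)[2]'(by omega), (P i)[3]'(by omega), ?_,
    h1V, h3V, hV2of _ h2V⟩
  apply List.ext_getElem (by simpa using hL5)
  intro m hm1 hm2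
  simp only [List.length_cons, List.length_nil] at hm2
  interval_cases m
  · simpa using hl0
  · rfl
  · rfl
  · rfl
  · simp only [List.getElem_cons_succ, List.getElem_cons_zero]
    rw [getElem_congr' (show 4 = (P i).length - 1 by omega) hm1]
    exact hlK
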